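/- Fix integers $m \geq 1$ and $e \geq 1$. Let $C$ be the $e \times e$ tridiagonal matrix over $\mathbb{Z}[q]$ with $C_{11} = 1 + q^e + q^{2e} + \cdots + q^{me}$, $C_{ii} = 1 + q^{me}$ for $2 \leq i \leq e$, $C_{i,i+1} = q^{me}$, $C_{i+1,i} = 1$ for $1 \leq i \leq e-1$, and all other entries $0$. Then $\det C = 1 + q^e + q^{2e} + \cdots + q^{me^2}$. -/
import Mathlib


open Polynomial


section Tri
variable {R : Type*} [CommRing R]

/-- entry function -/
def triEnt (a t : R) (i j : ℕ) : R :=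
  if i = j then (if i = 0 then a else 1 + t)
  else if j = i + 1 then t
  else if i = j + 1 then 1
  else 0

noncomputable def triMat (a t : R) (n : ℕ) : Matrix (Fin n) (Fin n) R :=
  fun i j => triEnt a t i j

lemma hcol (n : ℕ) : (Fin.castSucc (Fin.last n)).succAbove (Fin.last n) = Fin.last (n+1) := by
  simp [Fin.succAbove, Fin.lt_def]

lemma hcol2 (n : ℕ) (k : Fin n) :
    (Fin.castSucc (Fin.last n)).succAbove (Fin.castSucc k) = Fin.castSucc (Fin.castSucc k) := by
  simp [Fin.succAbove, Fin.lt_def, k.is_lt]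

lemma triMat_rec (a t : R) (n : ℕ) :
    (triMat a t (n+2)).det = (1+t) * (triMat a t (n+1)).det - t * (triMat a t n).det := by
  have hB : (triMat a t (n+2)).submatrix (Fin.last (n+1)).succAbove (Fin.last (n+1)).succAbove
      = triMat a t (n+1) := by
    ext i j
    simp [triMat, Fin.succAbove_last, Matrix.submatrix_apply]
  have hA : (triMat a t (n+2)).submatrix (Fin.last (n+1)).succAbove
      ((Fin.castSucc (Fin.last n)).succAbove) = fun i j =>
        (triMat a t (n+2)) (Fin.castSucc i) ((Fin.castSucc (Fin.last n)).succAbove j) := by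
    ext i j; simp [Fin.succAbove_last, Matrix.submatrix_apply]
  have hdetA : ((triMat a t (n+2)).submatrix (Fin.last (n+1)).succAbove
      ((Fin.castSucc (Fin.last n)).succAbove)).det = t * (triMat a t n).det := by
    rw [Matrix.det_succ_column _ (Fin.last n), Fin.sum_univ_castSucc]
    have hz : ∀ i : Fin n, ((triMat a t (n+2)).submatrix (Fin.last (n+1)).succAbove
        ((Fin.castSucc (Fin.last n)).succAbove)) (Fin.castSucc i) (Fin.last n) = 0 := by
      intro i
      have hi := i.is_lt
      simp only [Matrix.submatrix_apply, Fin.succAbove_last, hcol, triMat, triEnt,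
        Fin.val_last, Fin.coe_castSucc]
      rw [if_neg (by omega), if_neg (by omega), if_neg (by omega)]
    simp only [hz, mul_zero, zero_mul, Finset.sum_const_zero, zero_add]
    have hent : ((triMat a t (n+2)).submatrix (Fin.last (n+1)).succAbove
        ((Fin.castSucc (Fin.last n)).succAbove)) (Fin.last n) (Fin.last n) = t := by
      simp only [Matrix.submatrix_apply, Fin.succAbove_last, hcol, triMat, triEnt,
        Fin.val_last, Fin.coe_castSucc]
      rw [if_neg (by omega)]
      simp
    have hmin : (((triMat a t (n+2)).submatrix (Fin.last (n+1)).succAbove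
        ((Fin.castSucc (Fin.last n)).succAbove)).submatrix
        (Fin.last n).succAbove (Fin.last n).succAbove) = triMat a t n := by
      ext i j
      simp [Matrix.submatrix_apply, Fin.succAbove_last, hcol2, triMat]
    rw [hent, hmin]
    have : (-1 : R) ^ ((Fin.last n : ℕ) + (Fin.last n : ℕ)) = 1 :=
      Even.neg_one_pow ⟨n, by simp⟩
    rw [this]; ring
  rw [Matrix.det_succ_row _ (Fin.last (n+1)), Fin.sum_univ_castSucc, Fin.sum_univ_castSucc]
  have hent0 : ∀ j : Fin n,
      (triMat a t (n+2)) (Fin.last (n+1)) (Fin.castSucc (Fin.castSucc j)) = 0 := by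
    intro j
    have hj := j.is_lt
    simp only [triMat, triEnt, Fin.val_last, Fin.coe_castSucc]
    rw [if_neg (by omega), if_neg (by omega), if_neg (by omega)]
  simp only [hent0, mul_zero, zero_mul, Finset.sum_const_zero, zero_add]
  have he1 : (triMat a t (n+2)) (Fin.last (n+1)) (Fin.castSucc (Fin.last n)) = 1 := by
    simp only [triMat, triEnt, Fin.val_last, Fin.coe_castSucc]
    rw [if_neg (by omega), if_neg (by omega)]
    simp
  have he2 : (triMat a t (n+2)) (Fin.last (n+1)) (Fin.last (n+1)) = 1 + t := by
    simp only [triMat, triEnt, Fin.val_last]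
    rw [if_pos trivial, if_neg (by omega)]
  rw [he1, he2, hB, hdetA]
  simp only [Fin.val_last, Fin.coe_castSucc]
  have hs1 : (-1 : R) ^ ((n+1) + n) = -1 := Odd.neg_one_pow ⟨n, by ring⟩
  have hs2 : (-1 : R) ^ ((n+1) + (n+1)) = 1 := Even.neg_one_pow ⟨n+1, by ring⟩
  rw [hs1, hs2]
  ring
end Tri

lemma hsplit (m N : ℕ) (f : ℕ → Polynomial ℤ) :
    ∑ j ∈ Finset.range (N+m), f j = ∑ j ∈ Finset.range N, f j + ∑ j ∈ Finset.range m, f (N+j) := by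
  rw [← Finset.sum_range_add_sum_Ico f (Nat.le_add_right N m), Finset.sum_Ico_eq_sum_range]
  simp

lemma ht (m e k : ℕ) :
    (X : Polynomial ℤ)^(m*e) * ∑ j ∈ Finset.range (m*k+1), X ^ (j*e)
      = ∑ j ∈ Finset.range (m*k+1), X ^ ((j+m)*e) := by
  rw [Finset.mul_sum]
  refine Finset.sum_congr rfl fun j _ => ?_
  rw [← pow_add]; congr 1; ring

lemma triMat_det_formula (m e : ℕ) : ∀ n : ℕ,
    (triMat (∑ l ∈ Finset.range (m+1), (X : Polynomial ℤ) ^ (l*e)) (X ^ (m*e)) n).det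
      = ∑ j ∈ Finset.range (m*n+1), X ^ (j*e) := by
  have key : ∀ n : ℕ,
      ((triMat (∑ l ∈ Finset.range (m+1), (X : Polynomial ℤ) ^ (l*e)) (X ^ (m*e)) n).det
        = ∑ j ∈ Finset.range (m*n+1), X ^ (j*e)) ∧
      ((triMat (∑ l ∈ Finset.range (m+1), (X : Polynomial ℤ) ^ (l*e)) (X ^ (m*e)) (n+1)).det
        = ∑ j ∈ Finset.range (m*(n+1)+1), X ^ (j*e)) := by
    intro n
    induction n with
    | zero =>
      constructor
      · simp [triMat]
      · rw [Matrix.det_fin_one]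
        simp [triMat, triEnt]
    | succ n ih =>
      refine ⟨ih.2, ?_⟩
      rw [triMat_rec, ih.1, ih.2]
      have h1 : (X : Polynomial ℤ)^(m*e) * ∑ j ∈ Finset.range (m*n+1), X ^ (j*e)
          = ∑ j ∈ Finset.range (m*n+1), X ^ ((j+m)*e) := ht m e n
      have h2 : (X : Polynomial ℤ)^(m*e) * ∑ j ∈ Finset.range (m*(n+1)+1), X ^ (j*e)
          = (∑ j ∈ Finset.range (m*n+1), X ^ ((j+m)*e))
            + ∑ j ∈ Finset.range m, X ^ ((m*n+1+j+m)*e) := by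
        rw [ht m e (n+1)]
        have hidx : m*(n+1)+1 = (m*n+1)+m := by ring
        rw [hidx, hsplit]
      have h3 : (∑ j ∈ Finset.range (m*(n+1+1)+1), (X : Polynomial ℤ) ^ (j*e))
          = (∑ j ∈ Finset.range (m*(n+1)+1), X ^ (j*e))
            + ∑ j ∈ Finset.range m, X ^ ((m*(n+1)+1+j)*e) := by
        have hidx : m*(n+1+1)+1 = (m*(n+1)+1)+m := by ring
        rw [hidx, hsplit]
      have h4 : (∑ j ∈ Finset.range m, (X : Polynomial ℤ) ^ ((m*n+1+j+m)*e))
          = ∑ j ∈ Finset.range m, X ^ ((m*(n+1)+1+j)*e) :=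
        Finset.sum_congr rfl fun j _ => by congr 1; ring
      calc (1 + (X : Polynomial ℤ)^(m*e)) * (∑ j ∈ Finset.range (m*(n+1)+1), X ^ (j*e))
            - X^(m*e) * ∑ j ∈ Finset.range (m*n+1), X ^ (j*e)
          = (∑ j ∈ Finset.range (m*(n+1)+1), X ^ (j*e))
            + (X^(m*e) * ∑ j ∈ Finset.range (m*(n+1)+1), X ^ (j*e))
            - X^(m*e) * ∑ j ∈ Finset.range (m*n+1), X ^ (j*e) := by ring
        _ = ∑ j ∈ Finset.range (m*(n+1+1)+1), X ^ (j*e) := by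
            rw [h1, h2, h3, h4]; ring
  exact fun n => (key n).1



/-- The graded Cartan matrix of the Brauer line of type `(m,e)`:
tridiagonal with `C₁₁ = 1 + q^e + ⋯ + q^{me}`, other diagonal entries `1 + q^{me}`,
superdiagonal `q^{me}`, subdiagonal `1`. -/
noncomputable def gradedCartanLine (m e : ℕ) : Matrix (Fin e) (Fin e) (Polynomial ℤ) :=
  fun i j =>
    if i = j then
      (if (i : ℕ) = 0 then ∑ l ∈ Finset.range (m + 1), X ^ (l * e) else 1 + X ^ (m * e))
    else if (j : ℕ) = (i : ℕ) + 1 then X ^ (m * e)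
    else if (i : ℕ) = (j : ℕ) + 1 then 1
    else 0

/-- The graded Cartan determinant: `det C = 1 + q^e + q^{2e} + ⋯ + q^{me²}`. -/
theorem gradedCartanLine_det (m e : ℕ) (hm : 1 ≤ m) (he : 1 ≤ e) :
    (gradedCartanLine m e).det = ∑ j ∈ Finset.range (m * e + 1), X ^ (j * e) := by
  have h : gradedCartanLine m e
      = triMat (∑ l ∈ Finset.range (m+1), (X : Polynomial ℤ) ^ (l*e)) (X ^ (m*e)) e := by
    ext i j
    simp only [gradedCartanLine, triMat, triEnt, Fin.ext_iff]
  rw [h, triMat_det_formula]
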